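/- Fix d ≥ 1, a nonempty action set A, and β > 0. On ℝ^d = EuclideanSpace ℝ (Fin d), let b : ℝ^d × A → ℝ^d, Q : ℝ^d × A → Matrix (Fin d) (Fin d) ℝ with each Q(s,a) symmetric and positive semidefinite, and r : ℝ^d × A → ℝ, and for twice continuously differentiable f define (L^a f)(s) = ⟪b(s,a), ∇f(s)⟫ + (1/2)·trace(Q(s,a) · Hess f(s)) and H[f](s) = ⨆_{a∈A} ( r(s,a) + (L^a f)(s) ), assumed finite where used. Let V : ℝ^d → ℝ be twice continuously differentiable with βV(s) = H[V](s) for all s, let g : ℝ^d → ℝ^d, let h : A → A be a bijection, and set W = V ∘ g, assumed twice continuously differentiable. Assume for all (s,a): |r(g(s), h(a)) − r(s,a)| ≤ ε_r and |(L^{h(a)} V)(g(s)) − (L^a W)(s)| ≤ ε_L, and assume both W − V and V − W attain their suprema at some points of ℝ^d. Then sup_{s} |V(g(s)) − V(s)| ≤ (ε_r + ε_L)/β. -/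

import Mathlib

open RealInnerProductSpace

/-- The Hessian matrix of second partial derivatives of `f` at `s`. -/
noncomputable def hessMat {d : ℕ} (f : EuclideanSpace ℝ (Fin d) → ℝ)
    (s : EuclideanSpace ℝ (Fin d)) : Matrix (Fin d) (Fin d) ℝ :=
  fun i j =>
    iteratedFDeriv ℝ 2 f s ![EuclideanSpace.single i 1, EuclideanSpace.single j 1]

/-- The controlled second-order generator
`(L^a f)(s) = ⟪b(s,a), ∇f(s)⟫ + (1/2)·trace(Q(s,a)·Hess f(s))`. -/
noncomputable def gen {d : ℕ} {A : Type*}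
    (b : EuclideanSpace ℝ (Fin d) × A → EuclideanSpace ℝ (Fin d))
    (Q : EuclideanSpace ℝ (Fin d) × A → Matrix (Fin d) (Fin d) ℝ)
    (a : A) (f : EuclideanSpace ℝ (Fin d) → ℝ) (s : EuclideanSpace ℝ (Fin d)) : ℝ :=
  ⟪b (s, a), gradient f s⟫ + (1 / 2) * (Q (s, a) * hessMat f s).trace

/-- The Hamiltonian `H[f](s) = ⨆_a ( r(s,a) + (L^a f)(s) )`. -/
noncomputable def ham {d : ℕ} {A : Type*}
    (b : EuclideanSpace ℝ (Fin d) × A → EuclideanSpace ℝ (Fin d))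
    (Q : EuclideanSpace ℝ (Fin d) × A → Matrix (Fin d) (Fin d) ℝ)
    (r : EuclideanSpace ℝ (Fin d) × A → ℝ)
    (f : EuclideanSpace ℝ (Fin d) → ℝ) (s : EuclideanSpace ℝ (Fin d)) : ℝ :=
  ⨆ a : A, (r (s, a) + gen b Q a f s)



/-- 1D second-derivative necessary condition at a global max. -/
lemma aux_second_deriv_nonpos {ψ ψ' : ℝ → ℝ} {c : ℝ}
    (hmax : ∀ t, ψ t ≤ ψ 0) (hd : ∀ t, HasDerivAt ψ (ψ' t) t)
    (hd' : HasDerivAt ψ' c 0) : c ≤ 0 := by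
  by_contra hc
  push_neg at hc
  have hψ'0 : ψ' 0 = 0 :=
    (IsLocalMax.hasDerivAt_eq_zero (Filter.Eventually.of_forall hmax) (hd 0))
  have hslope : Filter.Tendsto (slope ψ' 0) (nhdsWithin 0 {(0:ℝ)}ᶜ) (nhds c) :=
    hasDerivAt_iff_tendsto_slope.mp hd'
  have hev : ∀ᶠ t in nhdsWithin 0 {(0:ℝ)}ᶜ, 0 < slope ψ' 0 t :=
    hslope.eventually (eventually_gt_nhds hc)
  have hev' : ∀ᶠ t in nhdsWithin (0:ℝ) (Set.Ioi 0), 0 < slope ψ' 0 t :=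
    hev.filter_mono (nhdsWithin_mono _ (fun t (ht : t ∈ Set.Ioi (0:ℝ)) => by
      simp only [Set.mem_compl_iff, Set.mem_singleton_iff]
      exact ne_of_gt ht))
  rw [eventually_nhdsWithin_iff] at hev'
  rcases Metric.eventually_nhds_iff.mp hev' with ⟨u, hu, hball⟩
  have key : ∀ t : ℝ, 0 < t → t < u → 0 < ψ' t := by
    intro t ht htu
    have : 0 < slope ψ' 0 t := by
      apply hball (by simpa [abs_of_pos ht] using htu) ht
    rw [slope_def_field] at this
    have := mul_pos this ht
    rwa [hψ'0, sub_zero, sub_zero, div_mul_cancel₀] at this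
    exact ne_of_gt ht
  -- ψ strictly increasing on [0, u/2]
  have hmono : StrictMonoOn ψ (Set.Icc 0 (u/2)) := by
    apply strictMonoOn_of_deriv_pos (convex_Icc _ _)
    · exact fun t _ => (hd t).continuousAt.continuousWithinAt
    · intro t ht
      rw [interior_Icc] at ht
      rw [(hd t).deriv]
      exact key t ht.1 (lt_of_lt_of_le ht.2 (by linarith))
  have h0 : (0:ℝ) ∈ Set.Icc (0:ℝ) (u/2) := by constructor <;> linarith
  have h1 : (u/2) ∈ Set.Icc (0:ℝ) (u/2) := by constructor <;> linarith
  have := hmono h0 h1 (by linarith)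
  exact absurd (hmax (u/2)) (not_le.mpr this)


lemma aux_sum_single {d : ℕ} (v : EuclideanSpace ℝ (Fin d)) :
    ∑ i, v i • EuclideanSpace.single i (1:ℝ) = v := by
  ext j
  simp only [PiLp.ext_iff]
  rw [WithLp.ofLp_sum, Finset.sum_apply]
  simp [EuclideanSpace.single_apply]

lemma aux_bilin_expand {d : ℕ}
    (B : EuclideanSpace ℝ (Fin d) →L[ℝ] EuclideanSpace ℝ (Fin d) →L[ℝ] ℝ)
    (v : EuclideanSpace ℝ (Fin d)) :
    B v v = ∑ i, ∑ j, v i * v j *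
      B (EuclideanSpace.single i 1) (EuclideanSpace.single j 1) := by
  have h2 : ∀ L : EuclideanSpace ℝ (Fin d) →L[ℝ] ℝ,
      L v = ∑ j, v j * L (EuclideanSpace.single j 1) := by
    intro L
    conv_lhs => rw [← aux_sum_single v]
    rw [map_sum]
    exact Finset.sum_congr rfl fun j _ => by rw [map_smul, smul_eq_mul]
  have h1 : B v v = ∑ i, v i * B (EuclideanSpace.single i 1) v := by
    conv_lhs => rw [show B v = ∑ i, v i • B (EuclideanSpace.single i 1) by
      conv_lhs => rw [← aux_sum_single v]
      rw [map_sum]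
      exact Finset.sum_congr rfl fun i _ => by rw [map_smul]]
    rw [ContinuousLinearMap.sum_apply]
    exact Finset.sum_congr rfl fun i _ => by rw [ContinuousLinearMap.smul_apply, smul_eq_mul]
  rw [h1]
  refine Finset.sum_congr rfl fun i _ => ?_
  rw [h2 (B (EuclideanSpace.single i 1)), Finset.mul_sum]
  exact Finset.sum_congr rfl fun j _ => by ring

lemma aux_trace_nonneg {n : ℕ} {M : Matrix (Fin n) (Fin n) ℝ}
    (hM : M.PosSemidef) : 0 ≤ M.trace := by
  rw [Matrix.trace]
  refine Finset.sum_nonneg fun i _ => ?_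
  exact hM.diag_nonneg

lemma aux_trace_mul_nonneg {n : ℕ} {P M : Matrix (Fin n) (Fin n) ℝ}
    (hP : P.PosSemidef) (hM : M.PosSemidef) : 0 ≤ (P * M).trace := by
  obtain ⟨B, hB⟩ : ∃ B : Matrix (Fin n) (Fin n) ℝ, P = B.conjTranspose * B := by
    open scoped MatrixOrder in
    open scoped Matrix.Norms.L2Operator in
    exact CStarAlgebra.nonneg_iff_eq_star_mul_self.mp hP.nonneg
  have h1 : (P * M).trace = (B * M * B.conjTranspose).trace := by
    rw [hB, Matrix.mul_assoc, Matrix.trace_mul_comm]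
  rw [h1]
  exact aux_trace_nonneg (hM.mul_mul_conjTranspose_same B)

lemma aux_quad_nonpos {d : ℕ} {φ : EuclideanSpace ℝ (Fin d) → ℝ} (hφ : ContDiff ℝ 2 φ)
    {s₀ : EuclideanSpace ℝ (Fin d)} (hmax : ∀ s, φ s ≤ φ s₀)
    (v : EuclideanSpace ℝ (Fin d)) : fderiv ℝ (fderiv ℝ φ) s₀ v v ≤ 0 := by
  have hdiff : Differentiable ℝ φ := hφ.differentiable (by norm_num)
  have hline : ∀ t : ℝ, HasDerivAt (fun t : ℝ => s₀ + t • v) v t := by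
    intro t
    simpa using ((hasDerivAt_id t).smul_const v).const_add s₀
  have hψ : ∀ t : ℝ, HasDerivAt (fun t : ℝ => φ (s₀ + t • v)) (fderiv ℝ φ (s₀ + t • v) v) t :=
    fun t => (hdiff _).hasFDerivAt.comp_hasDerivAt t (hline t)
  have hB : HasFDerivAt (fderiv ℝ φ) (fderiv ℝ (fderiv ℝ φ) s₀) ((fun t : ℝ => s₀ + t • v) 0) := by
    simpa using ((hφ.fderiv_right (m := 1) (by norm_num)).differentiable (by norm_num) s₀).hasFDerivAt
  have step1 : HasDerivAt (fun t : ℝ => fderiv ℝ φ (s₀ + t • v)) (fderiv ℝ (fderiv ℝ φ) s₀ v) 0 :=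
    hB.comp_hasDerivAt 0 (hline 0)
  have step2 : HasDerivAt (fun t : ℝ => fderiv ℝ φ (s₀ + t • v) v)
      (fderiv ℝ (fderiv ℝ φ) s₀ v v) 0 :=
    (ContinuousLinearMap.apply ℝ ℝ v).hasFDerivAt.comp_hasDerivAt 0 step1
  exact aux_second_deriv_nonpos (fun t => by simpa using hmax (s₀ + t • v)) hψ step2

lemma aux_trace_hess_nonpos {d : ℕ} {φ : EuclideanSpace ℝ (Fin d) → ℝ} (hφ : ContDiff ℝ 2 φ)
    {s₀ : EuclideanSpace ℝ (Fin d)} (hmax : ∀ s, φ s ≤ φ s₀)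
    {Q : Matrix (Fin d) (Fin d) ℝ} (hQ : Q.PosSemidef) :
    (Q * hessMat φ s₀).trace ≤ 0 := by
  set B := fderiv ℝ (fderiv ℝ φ) s₀ with hBdef
  have hdiff : Differentiable ℝ φ := hφ.differentiable (by norm_num)
  have hB : HasFDerivAt (fderiv ℝ φ) B s₀ :=
    ((hφ.fderiv_right (m := 1) (by norm_num)).differentiable (by norm_num) s₀).hasFDerivAt
  have hhess : ∀ i j, hessMat φ s₀ i j
      = B (EuclideanSpace.single i 1) (EuclideanSpace.single j 1) := by
    intro i j
    rw [hessMat, iteratedFDeriv_two_apply]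
    simp [hBdef]
  have hsymm : ∀ v w, B v w = B w v :=
    second_derivative_symmetric (fun y => (hdiff y).hasFDerivAt) hB
  have hquad := aux_quad_nonpos hφ hmax
  have hpsd : (-(hessMat φ s₀)).PosSemidef := by
    refine Matrix.posSemidef_iff_dotProduct_mulVec.mpr ⟨?_, ?_⟩
    · ext i j
      simp only [Matrix.conjTranspose_apply, Matrix.neg_apply, star_trivial, hhess]
      rw [hsymm]
    · intro x
      set v : EuclideanSpace ℝ (Fin d) := (WithLp.equiv 2 (Fin d → ℝ)).symm x with hv
      have hxv : ∀ i, x i = v i := fun i => rfl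
      have hBvv := hquad v
      rw [aux_bilin_expand B v] at hBvv
      have hdot : dotProduct (star x) (Matrix.mulVec (-(hessMat φ s₀)) x)
          = -∑ i, ∑ j, v i * v j *
            B (EuclideanSpace.single i 1) (EuclideanSpace.single j 1) := by
        simp only [star_trivial, dotProduct, Matrix.mulVec, Matrix.neg_apply,
          dotProduct, ← Finset.sum_neg_distrib, Finset.mul_sum]
        refine Finset.sum_congr rfl fun i _ => ?_
        refine Finset.sum_congr rfl fun j _ => ?_
        rw [hhess, hxv i, hxv j]
        ring
      rw [hdot]
      linarith
  have h := aux_trace_mul_nonneg hQ hpsd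
  rw [Matrix.mul_neg, Matrix.trace_neg] at h
  linarith

lemma aux_gen_le {d : ℕ} {A : Type*}
    (b : EuclideanSpace ℝ (Fin d) × A → EuclideanSpace ℝ (Fin d))
    (Q : EuclideanSpace ℝ (Fin d) × A → Matrix (Fin d) (Fin d) ℝ)
    (hQ : ∀ s a, (Q (s, a)).PosSemidef)
    {W V : EuclideanSpace ℝ (Fin d) → ℝ}
    (hWc : ContDiff ℝ 2 W) (hVc : ContDiff ℝ 2 V)
    {s₀ : EuclideanSpace ℝ (Fin d)}
    (hmax : ∀ s, W s - V s ≤ W s₀ - V s₀) (a : A) :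
    gen b Q a W s₀ ≤ gen b Q a V s₀ := by
  set φ : EuclideanSpace ℝ (Fin d) → ℝ := fun s => W s - V s with hφdef
  have hφ : ContDiff ℝ 2 φ := hWc.sub hVc
  have hmax' : ∀ s, φ s ≤ φ s₀ := hmax
  have hWd : Differentiable ℝ W := hWc.differentiable (by norm_num)
  have hVd : Differentiable ℝ V := hVc.differentiable (by norm_num)
  have hfφ : fderiv ℝ φ = fun y => fderiv ℝ W y - fderiv ℝ V y :=
    funext fun y => fderiv_sub (hWd y) (hVd y)
  have h0 : fderiv ℝ φ s₀ = 0 :=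
    IsLocalMax.fderiv_eq_zero (Filter.Eventually.of_forall hmax')
  have hfeq : fderiv ℝ W s₀ = fderiv ℝ V s₀ := by
    have h1 : fderiv ℝ W s₀ - fderiv ℝ V s₀ = 0 := by rw [← congrFun hfφ s₀, h0]
    exact sub_eq_zero.mp h1
  have hgrads : gradient W s₀ = gradient V s₀ := by
    simp only [gradient, hfeq]
  have hBφ : fderiv ℝ (fderiv ℝ φ) s₀
      = fderiv ℝ (fderiv ℝ W) s₀ - fderiv ℝ (fderiv ℝ V) s₀ := by
    rw [hfφ]
    exact fderiv_fun_sub ((hWc.fderiv_right (m := 1) (by norm_num)).differentiable (by norm_num) s₀)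
      ((hVc.fderiv_right (m := 1) (by norm_num)).differentiable (by norm_num) s₀)
  have hhess : hessMat W s₀ - hessMat V s₀ = hessMat φ s₀ := by
    ext i j
    simp only [Matrix.sub_apply, hessMat, iteratedFDeriv_two_apply, hBφ]
    simp
  have htr := aux_trace_hess_nonpos hφ hmax' (hQ s₀ a)
  rw [← hhess, Matrix.mul_sub, Matrix.trace_sub] at htr
  simp only [gen, hgrads]
  linarith

/-- Approximate value-preserving structure implies approximate value invariance
(classical-regularity version): the pullback of the HJB solution `V` along the
transformation deviates from `V` by at most `(ε_r + ε_L)/β` in supremum norm. -/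
theorem stmt_11 {d : ℕ} (hd : 1 ≤ d) {A : Type*} [Nonempty A] (β : ℝ) (hβ : 0 < β)
    (b : EuclideanSpace ℝ (Fin d) × A → EuclideanSpace ℝ (Fin d))
    (Q : EuclideanSpace ℝ (Fin d) × A → Matrix (Fin d) (Fin d) ℝ)
    (hQ : ∀ s a, (Q (s, a)).PosSemidef)
    (r : EuclideanSpace ℝ (Fin d) × A → ℝ)
    (εr εL : ℝ)
    (V : EuclideanSpace ℝ (Fin d) → ℝ) (hV : ContDiff ℝ 2 V)
    (g : EuclideanSpace ℝ (Fin d) → EuclideanSpace ℝ (Fin d))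
    (h : A → A) (hbij : Function.Bijective h)
    (hW : ContDiff ℝ 2 (V ∘ g))
    (hfinV : ∀ s, BddAbove (Set.range fun a : A => r (s, a) + gen b Q a V s))
    (hfinW : ∀ s, BddAbove (Set.range fun a : A => r (s, a) + gen b Q a (V ∘ g) s))
    (hVsol : ∀ s, β * V s = ham b Q r V s)
    (hrclose : ∀ s a, |r (g s, h a) - r (s, a)| ≤ εr)
    (hgenclose : ∀ s a, |gen b Q (h a) V (g s) - gen b Q a (V ∘ g) s| ≤ εL)
    (hattain₁ : ∃ s₀, ∀ s, (V ∘ g) s - V s ≤ (V ∘ g) s₀ - V s₀)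
    (hattain₂ : ∃ s₀, ∀ s, V s - (V ∘ g) s ≤ V s₀ - (V ∘ g) s₀) :
    ∀ s, |V (g s) - V s| ≤ (εr + εL) / β := by
  obtain ⟨s₀, hs₀⟩ := hattain₁
  obtain ⟨s₁, hs₁⟩ := hattain₂
  -- upper bound at the max of W - V
  have hβW : β * (V ∘ g) s₀ ≤ β * V s₀ + (εr + εL) := by
    have h1 : β * V (g s₀) = ⨆ a : A, (r (g s₀, h a) + gen b Q (h a) V (g s₀)) := by
      rw [hVsol (g s₀)]
      simp only [ham]
      exact (hbij.surjective.iSup_comp fun a' => r (g s₀, a') + gen b Q a' V (g s₀)).symm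
    have h2 : ∀ a : A, r (g s₀, h a) + gen b Q (h a) V (g s₀) ≤ β * V s₀ + (εr + εL) := by
      intro a
      have hr := (abs_le.mp (hrclose s₀ a)).2
      have hg := (abs_le.mp (hgenclose s₀ a)).2
      have hcomp : gen b Q a (V ∘ g) s₀ ≤ gen b Q a V s₀ := aux_gen_le b Q hQ hW hV hs₀ a
      have hle : r (s₀, a) + gen b Q a V s₀ ≤ ham b Q r V s₀ := le_ciSup (hfinV s₀) a
      rw [← hVsol s₀] at hle
      linarith
    have : β * (V ∘ g) s₀ = β * V (g s₀) := rfl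
    rw [this, h1]
    exact ciSup_le h2
  have hub : (V ∘ g) s₀ - V s₀ ≤ (εr + εL) / β := by
    rw [le_div_iff₀ hβ, sub_mul]
    have e1 : β * ((V ∘ g) s₀) = ((V ∘ g) s₀) * β := mul_comm _ _
    have e2 : β * (V s₀) = (V s₀) * β := mul_comm _ _
    linarith
  -- upper bound at the max of V - W
  have hβV : β * V s₁ ≤ β * (V ∘ g) s₁ + (εr + εL) := by
    have h2 : ∀ a : A, r (s₁, a) + gen b Q a V s₁ ≤ β * (V ∘ g) s₁ + (εr + εL) := by
      intro a
      have hr := (abs_le.mp (hrclose s₁ a)).1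
      have hg := (abs_le.mp (hgenclose s₁ a)).1
      have hcomp : gen b Q a V s₁ ≤ gen b Q a (V ∘ g) s₁ := aux_gen_le b Q hQ hV hW hs₁ a
      have hbdd : BddAbove (Set.range fun a : A =>
          r (g s₁, h a) + gen b Q (h a) V (g s₁)) := by
        rw [show (fun a : A => r (g s₁, h a) + gen b Q (h a) V (g s₁))
            = (fun a' : A => r (g s₁, a') + gen b Q a' V (g s₁)) ∘ h from rfl,
          hbij.surjective.range_comp]
        exact hfinV (g s₁)
      have hle : r (g s₁, h a) + gen b Q (h a) V (g s₁)
          ≤ ⨆ a' : A, (r (g s₁, h a') + gen b Q (h a') V (g s₁)) := le_ciSup hbdd a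
      have heq : (⨆ a' : A, (r (g s₁, h a') + gen b Q (h a') V (g s₁))) = β * V (g s₁) := by
        rw [hVsol (g s₁)]
        simp only [ham]
        exact hbij.surjective.iSup_comp fun a' => r (g s₁, a') + gen b Q a' V (g s₁)
      have hWs : β * (V ∘ g) s₁ = β * V (g s₁) := rfl
      rw [hWs]
      linarith
    have h1 : β * V s₁ = ⨆ a : A, (r (s₁, a) + gen b Q a V s₁) := by
      rw [hVsol s₁]; simp only [ham]
    rw [h1]
    exact ciSup_le h2
  have hlb : V s₁ - (V ∘ g) s₁ ≤ (εr + εL) / β := by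
    rw [le_div_iff₀ hβ, sub_mul]
    have e1 : β * ((V ∘ g) s₁) = ((V ∘ g) s₁) * β := mul_comm _ _
    have e2 : β * (V s₁) = (V s₁) * β := mul_comm _ _
    linarith
  intro s
  have h1 := hs₀ s
  have h2 := hs₁ s
  simp only [Function.comp_apply] at h1 h2 hub hlb
  refine abs_le.mpr ⟨?_, ?_⟩
  · linarith
  · linarith
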